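/- Let h : ℝ → ℝ be twice continuously differentiable and odd, with h(t + 2π) = h(t) + 2kπ for some integer k, with h''(t) > 0 for t ∈ (0, π), and satisfying Condition (M) with constants c ∈ (0, π/8) and C. Let ω(δ) = sup{ |h''(x) − h''(y)| : x, y ∈ [0, π], |x − y| < δ } be the modulus of continuity of h'' on [0, π], and a_{n,ν} = (1/(2π)) ∫_{−π}^{π} exp(i(n h(t) − ν t)) dt. Then there exists C' > 0 such that for every positive integer n and every δ ∈ (0, c): Σ_{ν ∈ ℤ : n h'(0) + 1 < ν < n h'(2δ)} |a_{n,ν}| ≤ C'·(1 + n δ² ω(δ)), and likewise Σ_{ν ∈ ℤ : n h'(π − 2δ) < ν < n h'(π) − 1} |a_{n,ν}| ≤ C'·(1 + n δ² ω(δ)). -/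

import Mathlib

open MeasureTheory Filter Set intervalIntegral
open scoped Real Topology Classical


section PeripheryHelpers

lemma sqrt_le_one_add (x : ℝ) (hx : 0 ≤ x) : Real.sqrt x ≤ 1 + x := by
  have h1 : x ≤ (1 + x) ^ 2 := by nlinarith
  calc Real.sqrt x ≤ Real.sqrt ((1+x)^2) := Real.sqrt_le_sqrt h1
    _ = 1 + x := Real.sqrt_sq (by linarith)

lemma osc_bound (φ φ' φ'' : ℝ → ℝ) (a b G : ℝ) (hab : a ≤ b) (hG : 0 < G)
    (hd1 : ∀ t ∈ Set.uIcc a b, HasDerivAt φ (φ' t) t)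
    (hd2 : ∀ t ∈ Set.uIcc a b, HasDerivAt φ' (φ'' t) t)
    (hc2 : ContinuousOn φ'' (Set.uIcc a b))
    (hlb : ∀ t ∈ Set.uIcc a b, G ≤ |φ' t|)
    (hsgn : (∀ t ∈ Set.uIcc a b, 0 ≤ φ'' t) ∨ (∀ t ∈ Set.uIcc a b, φ'' t ≤ 0)) :
    ‖∫ t in a..b, Complex.exp (Complex.I * (φ t : ℂ))‖ ≤ 4 / G := by
  have hne : ∀ t ∈ Set.uIcc a b, φ' t ≠ 0 := by
    intro t ht h0
    have := hlb t ht; rw [h0, abs_zero] at this; linarith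
  have hcφ : ContinuousOn φ (Set.uIcc a b) := fun t ht => ((hd1 t ht).continuousAt).continuousWithinAt
  have hcφ' : ContinuousOn φ' (Set.uIcc a b) := fun t ht => ((hd2 t ht).continuousAt).continuousWithinAt
  set e : ℝ → ℂ := fun t => Complex.exp (Complex.I * (φ t : ℂ)) with he
  have hce : ContinuousOn e (Set.uIcc a b) :=
    (Complex.continuous_exp.comp_continuousOn
      ((continuous_const.continuousOn.mul (Complex.continuous_ofReal.comp_continuousOn hcφ))))
  have hnorme : ∀ t, ‖e t‖ = 1 := by
    intro t
    simp [he, Complex.norm_exp]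
  set r : ℝ → ℂ := fun t => Complex.I * e t * (φ'' t : ℂ) / ((φ' t : ℂ))^2 with hr
  have hcr : ContinuousOn r (Set.uIcc a b) := by
    apply ContinuousOn.div
    · exact (continuous_const.continuousOn.mul hce).mul
        (Complex.continuous_ofReal.comp_continuousOn hc2)
    · exact ((Complex.continuous_ofReal.comp_continuousOn hcφ')).pow 2
    · intro t ht
      simpa using fun h0 => hne t ht (by exact_mod_cast h0)
  set u : ℝ → ℂ := fun s => e s * (-Complex.I) * (((φ' s)⁻¹ : ℝ) : ℂ) with hu
  have key : ∀ t ∈ Set.uIcc a b, HasDerivAt u (e t + r t) t := by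
    intro t ht
    have h1 : HasDerivAt (fun s => ((φ s : ℝ) : ℂ)) ((φ' t : ℝ) : ℂ) t :=
      (hd1 t ht).ofReal_comp
    have hexp : HasDerivAt e (Complex.I * (φ' t : ℂ) * e t) t := by
      simpa [he, mul_comm, mul_left_comm] using (h1.const_mul Complex.I).cexp
    have hinvR : HasDerivAt (fun s => (φ' s)⁻¹) (-(φ'' t) / (φ' t)^2) t :=
      (hd2 t ht).inv (hne t ht)
    have hinv : HasDerivAt (fun s => (((φ' s)⁻¹ : ℝ) : ℂ)) ((-(φ'' t) / (φ' t)^2 : ℝ) : ℂ) t :=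
      hinvR.ofReal_comp
    have := (hexp.mul_const (-Complex.I)).mul hinv
    convert this using 1
    · rfl
    · rfl
    have hφne : ((φ' t : ℝ) : ℂ) ≠ 0 := by exact_mod_cast hne t ht
    simp only [hr]
    push_cast
    field_simp
    ring_nf
    rw [Complex.I_sq]
    ring
  -- FTC
  have hie : IntervalIntegrable e volume a b := hce.intervalIntegrable
  have hir : IntervalIntegrable r volume a b := hcr.intervalIntegrable
  have hftc : ∫ t in a..b, (e t + r t) = u b - u a := by
    apply intervalIntegral.integral_eq_sub_of_hasDerivAt key
    exact (hce.add hcr).intervalIntegrable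
  have hsplit : ∫ t in a..b, (e t + r t) = (∫ t in a..b, e t) + ∫ t in a..b, r t :=
    intervalIntegral.integral_add hie hir
  have heq : ∫ t in a..b, e t = u b - u a - ∫ t in a..b, r t := by
    rw [← hftc, hsplit]; ring
  -- norms
  have hnormu : ∀ t ∈ Set.uIcc a b, ‖u t‖ ≤ 1 / G := by
    intro t ht
    have h1 : ‖u t‖ = |φ' t|⁻¹ := by
      simp [hu, hnorme t, norm_mul]
    rw [h1]
    rw [inv_le_comm₀ (lt_of_lt_of_le hG (hlb t ht)) (by positivity)]
    · rw [one_div, inv_inv]; exact hlb t ht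
  -- bound on ∫ r
  have hftc2 : ∫ t in a..b, φ'' t / (φ' t)^2 = -(φ' b)⁻¹ - -(φ' a)⁻¹ := by
    apply intervalIntegral.integral_eq_sub_of_hasDerivAt
    · intro t ht
      exact ((hd2 t ht).inv (hne t ht)).neg.congr_deriv (by ring)
    · exact (hc2.div ((hcφ'.pow 2)) (by
        intro t ht; exact pow_ne_zero 2 (hne t ht))).intervalIntegrable
  have habs : ∀ t ∈ Set.uIcc a b, ‖r t‖ = |φ'' t| / (φ' t)^2 := by
    intro t ht
    rw [hr]
    rw [norm_div, norm_mul, norm_mul]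
    simp [hnorme t, Complex.norm_real, sq_abs]
  have h2G : ∀ x ∈ Set.uIcc a b, |(φ' x)⁻¹| ≤ 1 / G := by
    intro x hx
    rw [abs_inv]
    rw [inv_le_comm₀ (lt_of_lt_of_le hG (hlb x hx)) (by positivity)]
    rw [one_div, inv_inv]; exact hlb x hx
  have hGG : (2:ℝ)/G = 1/G + 1/G := by ring
  have h1G := h2G a Set.left_mem_uIcc
  have h2Gb := h2G b Set.right_mem_uIcc
  have hub1 : -(φ' b)⁻¹ - -(φ' a)⁻¹ ≤ 2 / G := by
    have := le_abs_self (φ' a)⁻¹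
    have := neg_abs_le (φ' b)⁻¹
    linarith
  have hub2 : -(-(φ' b)⁻¹ - -(φ' a)⁻¹) ≤ 2 / G := by
    have := le_abs_self (φ' b)⁻¹
    have := neg_abs_le (φ' a)⁻¹
    linarith
  have hintr : ‖∫ t in a..b, r t‖ ≤ 2 / G := by
    have hbase : ‖∫ t in a..b, r t‖ ≤ ∫ t in a..b, ‖r t‖ :=
      intervalIntegral.norm_integral_le_integral_norm hab
    rcases hsgn with hp | hn
    · have e1 : Set.EqOn (fun x => ‖r x‖) (fun x => φ'' x / (φ' x) ^ 2) (Set.uIcc a b) := by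
        intro t ht
        show ‖r t‖ = φ'' t / (φ' t) ^ 2
        rw [habs t ht, abs_of_nonneg (hp t ht)]
      have : ∫ t in a..b, ‖r t‖ = ∫ t in a..b, φ'' t / (φ' t)^2 :=
        intervalIntegral.integral_congr e1
      rw [this, hftc2] at hbase
      linarith
    · have e1 : Set.EqOn (fun x => ‖r x‖) (fun x => -(φ'' x / (φ' x) ^ 2)) (Set.uIcc a b) := by
        intro t ht
        show ‖r t‖ = -(φ'' t / (φ' t) ^ 2)
        rw [habs t ht, abs_of_nonpos (hn t ht)]
        ring
      have : ∫ t in a..b, ‖r t‖ = ∫ t in a..b, -(φ'' t / (φ' t)^2) :=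
        intervalIntegral.integral_congr e1
      rw [this, intervalIntegral.integral_neg, hftc2] at hbase
      linarith
  calc ‖∫ t in a..b, e t‖ = ‖u b - u a - ∫ t in a..b, r t‖ := by rw [heq]
    _ ≤ ‖u b - u a‖ + ‖∫ t in a..b, r t‖ := norm_sub_le _ _
    _ ≤ (‖u b‖ + ‖u a‖) + 2 / G := by
        gcongr
        exact norm_sub_le _ _
    _ ≤ (1/G + 1/G) + 2/G := by
        gcongr
        · exact hnormu b Set.right_mem_uIcc
        · exact hnormu a Set.left_mem_uIcc
    _ = 4 / G := by ring

lemma intervalIntegral_conj (f : ℝ → ℂ) (aa bb : ℝ) :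
    ∫ t in aa..bb, (starRingEnd ℂ) (f t) = (starRingEnd ℂ) (∫ t in aa..bb, f t) := by
  rw [intervalIntegral, intervalIntegral, integral_conj, integral_conj, ← map_sub]

lemma exp_int_orth (k : ℤ) (a : ℝ) (hk : k ≠ 0) :
    ∫ t in a..(a + 2*π), Complex.exp (Complex.I * (k:ℂ) * (t:ℂ)) = 0 := by
  have hc : (Complex.I * (k:ℂ)) ≠ 0 :=
    mul_ne_zero Complex.I_ne_zero (Int.cast_ne_zero.2 hk)
  have : ∀ t : ℝ, Complex.exp (Complex.I * (k:ℂ) * (t:ℂ))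
      = Complex.exp ((Complex.I * (k:ℂ)) * (t:ℂ)) := by intro t; ring_nf
  rw [intervalIntegral.integral_congr (fun t _ => this t)]
  rw [integral_exp_mul_complex hc]
  have : Complex.exp (Complex.I * (k:ℂ) * ((a:ℂ) + 2*(π:ℂ)))
      = Complex.exp (Complex.I * (k:ℂ) * (a:ℂ)) := by
    rw [show Complex.I * (k:ℂ) * ((a:ℂ) + 2*(π:ℂ))
        = Complex.I * (k:ℂ) * (a:ℂ) + (k:ℂ) * (2*(π:ℂ)*Complex.I) by ring]
    rw [Complex.exp_add, Complex.exp_int_mul_two_pi_mul_I, mul_one]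
  rw [show ((a:ℝ) + 2*π : ℝ) = ((a + 2*π : ℝ)) from rfl]
  push_cast
  rw [this]
  simp

lemma bessel (F : ℝ → ℂ) (hF : Continuous F) (hF1 : ∀ t, ‖F t‖ = 1)
    (a b : ℝ) (hab : a ≤ b) (hb : b ≤ a + 2*π) (S : Finset ℤ) :
    ∑ ν ∈ S, ‖∫ t in a..b, F t * Complex.exp (-(Complex.I * (ν:ℂ) * (t:ℂ)))‖^2
      ≤ 2*π*(b-a) := by
  have hπ : (0:ℝ) < 2*π := by positivity
  have hπℂ : ((2*π : ℝ) : ℂ) ≠ 0 := by exact_mod_cast hπ.ne'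
  set cf : ℤ → ℂ := fun ν => ∫ t in a..b, F t * Complex.exp (-(Complex.I * (ν:ℂ) * (t:ℂ)))
    with hcf
  obtain ⟨γ, hcγ⟩ : ∃ g : ℤ → ℂ, ∀ ν, cf ν = ((2*π:ℝ):ℂ) * g ν :=
    ⟨fun ν => cf ν / ((2*π:ℝ):ℂ), fun ν => by
      rw [mul_comm]; exact (div_mul_cancel₀ (cf ν) hπℂ).symm⟩
  set P : ℝ → ℂ := fun t => ∑ ν ∈ S, γ ν * Complex.exp (Complex.I * (ν:ℂ) * (t:ℂ)) with hP
  -- continuity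
  have hce : ∀ ν : ℤ, Continuous (fun t : ℝ => Complex.exp (Complex.I * (ν:ℂ) * (t:ℂ))) := by
    intro ν
    exact Complex.continuous_exp.comp ((continuous_const.mul Complex.continuous_ofReal))
  have hcen : ∀ ν : ℤ, Continuous (fun t : ℝ => Complex.exp (-(Complex.I * (ν:ℂ) * (t:ℂ)))) := by
    intro ν
    exact Complex.continuous_exp.comp ((continuous_const.mul Complex.continuous_ofReal).neg)
  have hcP : Continuous P := by
    apply continuous_finset_sum
    intro ν _
    exact continuous_const.mul (hce ν)
  -- conj of P
  have hconjP : ∀ t : ℝ, (starRingEnd ℂ) (P t)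
      = ∑ ν ∈ S, (starRingEnd ℂ) (γ ν) * Complex.exp (-(Complex.I * (ν:ℂ) * (t:ℂ))) := by
    intro t
    rw [hP, map_sum]
    apply Finset.sum_congr rfl
    intro ν _
    rw [map_mul, ← Complex.exp_conj]
    congr 1
    simp only [map_mul, Complex.conj_I, Complex.conj_ofReal, map_intCast]
    ring
  -- pointwise ofReal representation of ∫ f conj f
  have hofReal : ∀ (f : ℝ → ℂ) (x y : ℝ), (∫ t in x..y, f t * (starRingEnd ℂ) (f t))
      = (((∫ t in x..y, Complex.normSq (f t)) : ℝ) : ℂ) := by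
    intro f x y
    rw [← intervalIntegral.integral_ofReal]
    apply intervalIntegral.integral_congr
    intro t _
    exact (Complex.mul_conj _)
  set BR : ℝ := ∑ ν ∈ S, Complex.normSq (γ ν) with hBR
  -- ∫ F conj P over [a,b]
  have hFP : (∫ t in a..b, F t * (starRingEnd ℂ) (P t)) = ((2*π*BR : ℝ) : ℂ) := by
    have hpt : ∀ t : ℝ, F t * (starRingEnd ℂ) (P t)
        = ∑ ν ∈ S, ((starRingEnd ℂ) (γ ν)) * (F t * Complex.exp (-(Complex.I * (ν:ℂ) * (t:ℂ)))) := by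
      intro t
      rw [hconjP t, Finset.mul_sum]
      apply Finset.sum_congr rfl
      intro ν _; ring
    rw [intervalIntegral.integral_congr (fun t _ => hpt t)]
    rw [intervalIntegral.integral_finset_sum]
    · have hterm : ∀ ν ∈ S, (∫ t in a..b,
          ((starRingEnd ℂ) (γ ν)) * (F t * Complex.exp (-(Complex.I * (ν:ℂ) * (t:ℂ)))))
          = ((2*π:ℝ):ℂ) * ((Complex.normSq (γ ν) : ℝ) : ℂ) := by
        intro ν _
        rw [intervalIntegral.integral_const_mul]
        have : (∫ t in a..b, F t * Complex.exp (-(Complex.I * (ν:ℂ) * (t:ℂ)))) = cf ν := rfl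
        rw [this, hcγ ν]
        rw [← Complex.mul_conj]
        ring
      rw [Finset.sum_congr rfl hterm, ← Finset.mul_sum, Complex.ofReal_mul]
      congr 1
      rw [hBR]
      push_cast
      rfl
    · intro ν _
      exact (continuous_const.mul (hF.mul (hcen ν))).intervalIntegrable _ _
  -- orthogonality with if
  have horthif : ∀ k : ℤ, (∫ t in a..(a+2*π), Complex.exp (Complex.I * (k:ℂ) * (t:ℂ)))
      = if k = 0 then ((2*π:ℝ):ℂ) else 0 := by
    intro k
    by_cases hk : k = 0
    · subst hk
      simp only [Int.cast_zero, mul_zero, zero_mul, Complex.exp_zero, if_true]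
      rw [intervalIntegral.integral_const]
      simp [Complex.real_smul]
    · rw [if_neg hk]
      exact exp_int_orth k a hk
  -- ∫ P conj P over the full period
  have hPPfull : (∫ t in a..(a+2*π), P t * (starRingEnd ℂ) (P t)) = ((2*π*BR:ℝ):ℂ) := by
    have hpt : ∀ t : ℝ, P t * (starRingEnd ℂ) (P t)
        = ∑ μ ∈ S, ∑ ν ∈ S, (γ μ * (starRingEnd ℂ) (γ ν))
            * Complex.exp (Complex.I * (((μ - ν : ℤ)):ℂ) * (t:ℂ)) := by
      intro t
      rw [hP, hconjP t, Finset.sum_mul_sum]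
      apply Finset.sum_congr rfl; intro μ _
      apply Finset.sum_congr rfl; intro ν _
      rw [mul_mul_mul_comm, ← Complex.exp_add]
      congr 1
      push_cast
      ring
    rw [intervalIntegral.integral_congr (fun t _ => hpt t)]
    rw [intervalIntegral.integral_finset_sum]
    swap
    · intro μ _
      apply Continuous.intervalIntegrable
      apply continuous_finset_sum
      intro ν _
      exact continuous_const.mul (hce _)
    have hrow : ∀ μ ∈ S, (∫ t in a..(a+2*π), ∑ ν ∈ S, (γ μ * (starRingEnd ℂ) (γ ν))
            * Complex.exp (Complex.I * (((μ - ν : ℤ)):ℂ) * (t:ℂ)))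
        = ((2*π:ℝ):ℂ) * ((Complex.normSq (γ μ) : ℝ):ℂ) := by
      intro μ hμ
      rw [intervalIntegral.integral_finset_sum (fun ν _ =>
        (show IntervalIntegrable (fun t : ℝ => γ μ * (starRingEnd ℂ) (γ ν) * Complex.exp (Complex.I * (((μ - ν : ℤ)):ℂ) * (t:ℂ))) volume a (a+2*π) from (continuous_const.mul (hce (μ - ν))).intervalIntegrable _ _))]
      have hterm : ∀ ν ∈ S, (∫ t in a..(a+2*π), (γ μ * (starRingEnd ℂ) (γ ν))
          * Complex.exp (Complex.I * (((μ - ν : ℤ)):ℂ) * (t:ℂ)))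
          = if ν = μ then γ μ * (starRingEnd ℂ) (γ ν) * ((2*π:ℝ):ℂ) else 0 := by
        intro ν _
        rw [intervalIntegral.integral_const_mul, horthif (μ - ν)]
        by_cases hνμ : ν = μ
        · rw [if_pos hνμ, if_pos (by omega)]
        · rw [if_neg hνμ, if_neg (by omega), mul_zero]
      rw [Finset.sum_congr rfl hterm, Finset.sum_ite_eq' S μ
        (fun ν => γ μ * (starRingEnd ℂ) (γ ν) * ((2*π:ℝ):ℂ)), if_pos hμ]
      rw [Complex.mul_conj]
      ring
    rw [Finset.sum_congr rfl hrow, ← Finset.mul_sum, Complex.ofReal_mul]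
    congr 1
    rw [hBR]
    push_cast
    rfl
  -- real quantities
  set R0 : ℝ := ∫ t in a..b, Complex.normSq (F t - P t) with hR0def
  set R2 : ℝ := ∫ t in a..b, Complex.normSq (P t) with hR2def
  set R3 : ℝ := ∫ t in a..(a+2*π), Complex.normSq (P t) with hR3def
  have hR0 : 0 ≤ R0 :=
    intervalIntegral.integral_nonneg hab (fun t _ => Complex.normSq_nonneg _)
  have hR3val : R3 = 2*π*BR := by
    have := (hofReal P a (a+2*π)).symm.trans hPPfull
    exact_mod_cast this
  have hR23 : R2 ≤ R3 := by
    have hint1 : IntervalIntegrable (fun t => Complex.normSq (P t)) volume a b :=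
      (Complex.continuous_normSq.comp hcP).intervalIntegrable _ _
    have hint2 : IntervalIntegrable (fun t => Complex.normSq (P t)) volume b (a+2*π) :=
      (Complex.continuous_normSq.comp hcP).intervalIntegrable _ _
    have hsplit := intervalIntegral.integral_add_adjacent_intervals hint1 hint2
    have hnn : 0 ≤ ∫ t in b..(a+2*π), Complex.normSq (P t) :=
      intervalIntegral.integral_nonneg hb (fun t _ => Complex.normSq_nonneg _)
    rw [hR2def, hR3def, ← hsplit]
    linarith
  -- ∫ F conj F = b - a
  have hFF : (∫ t in a..b, F t * (starRingEnd ℂ) (F t)) = ((b - a : ℝ):ℂ) := by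
    rw [hofReal F a b]
    norm_cast
    have : ∀ t ∈ Set.uIcc a b, Complex.normSq (F t) = (1:ℝ) := by
      intro t _
      rw [Complex.normSq_eq_norm_sq, hF1 t]
      norm_num
    rw [intervalIntegral.integral_congr this]
    simp
  -- ∫ P conj F = conj (∫ F conj P)
  have hPF : (∫ t in a..b, P t * (starRingEnd ℂ) (F t)) = ((2*π*BR:ℝ):ℂ) := by
    have hpt : ∀ t : ℝ, P t * (starRingEnd ℂ) (F t)
        = (starRingEnd ℂ) (F t * (starRingEnd ℂ) (P t)) := by
      intro t
      rw [map_mul, RingHomInvPair.comp_apply_eq]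
      ring
    rw [intervalIntegral.integral_congr (fun t _ => hpt t), _root_.intervalIntegral_conj, hFP,
      Complex.conj_ofReal]
  -- expansion of ∫ normSq (F - P)
  have hcFP : Continuous (fun t => F t - P t) := hF.sub hcP
  have hZ : ((R0 : ℝ) : ℂ) = ((b-a:ℝ):ℂ) - ((2*π*BR:ℝ):ℂ) - ((2*π*BR:ℝ):ℂ) + ((R2:ℝ):ℂ) := by
    rw [hR0def, ← hofReal (fun t => F t - P t) a b]
    have hpt : ∀ t : ℝ, (F t - P t) * (starRingEnd ℂ) (F t - P t)
        = F t * (starRingEnd ℂ) (F t) - F t * (starRingEnd ℂ) (P t)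
          - P t * (starRingEnd ℂ) (F t) + P t * (starRingEnd ℂ) (P t) := by
      intro t
      rw [map_sub]
      ring
    rw [intervalIntegral.integral_congr (fun t _ => hpt t)]
    have hi1 : IntervalIntegrable (fun t => F t * (starRingEnd ℂ) (F t)) volume a b :=
      (hF.mul (continuous_star.comp hF)).intervalIntegrable _ _
    have hi2 : IntervalIntegrable (fun t => F t * (starRingEnd ℂ) (P t)) volume a b :=
      (hF.mul (continuous_star.comp hcP)).intervalIntegrable _ _
    have hi3 : IntervalIntegrable (fun t => P t * (starRingEnd ℂ) (F t)) volume a b :=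
      (hcP.mul (continuous_star.comp hF)).intervalIntegrable _ _
    have hi4 : IntervalIntegrable (fun t => P t * (starRingEnd ℂ) (P t)) volume a b :=
      (hcP.mul (continuous_star.comp hcP)).intervalIntegrable _ _
    rw [intervalIntegral.integral_add ((hi1.sub hi2).sub hi3) hi4,
      intervalIntegral.integral_sub (hi1.sub hi2) hi3,
      intervalIntegral.integral_sub hi1 hi2]
    rw [hFF, hFP, hPF, hofReal P a b]
  have hZreal : R0 = (b-a) - 2*π*BR - 2*π*BR + R2 := by
    exact_mod_cast hZ
  have hkey : 2*π*BR ≤ b - a := by linarith [hR0, hR23, hR3val.symm.le, hR3val]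
  -- conclude
  have hsum : ∑ ν ∈ S, ‖∫ t in a..b, F t * Complex.exp (-(Complex.I * (ν:ℂ) * (t:ℂ)))‖^2
      = (2*π)^2 * BR := by
    rw [hBR, Finset.mul_sum]
    apply Finset.sum_congr rfl
    intro ν _
    have h1 : (∫ t in a..b, F t * Complex.exp (-(Complex.I * (ν:ℂ) * (t:ℂ)))) = cf ν := rfl
    rw [h1, hcγ ν, norm_mul]
    have h2 : ‖((2*π:ℝ):ℂ)‖ = 2*π := by
      rw [Complex.norm_real]
      exact abs_of_pos hπ
    rw [h2, mul_pow, Complex.normSq_eq_norm_sq]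
  rw [hsum]
  nlinarith [hπ, hkey]

lemma card_filter_le_aux (x y : ℝ) (hxy : x ≤ y + 1) (A B : ℤ) (P : ℤ → Prop) [DecidablePred P]
    (hP : ∀ ν : ℤ, P ν → x ≤ (ν:ℝ) ∧ (ν:ℝ) ≤ y) :
    (((Finset.Icc A B).filter P).card : ℝ) ≤ y - x + 1 := by
  have hsub : (Finset.Icc A B).filter P ⊆ Finset.Icc ⌈x⌉ ⌊y⌋ := by
    intro ν hν
    have hPν := (Finset.mem_filter.mp hν).2
    obtain ⟨h1, h2⟩ := hP ν hPν
    exact Finset.mem_Icc.mpr ⟨Int.ceil_le.mpr h1, Int.le_floor.mpr h2⟩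
  have hcard : ((Finset.Icc A B).filter P).card ≤ (Finset.Icc ⌈x⌉ ⌊y⌋).card :=
    Finset.card_le_card hsub
  have hIcc : (Finset.Icc ⌈x⌉ ⌊y⌋).card = (⌊y⌋ + 1 - ⌈x⌉).toNat := Int.card_Icc _ _
  have hxc : x ≤ (⌈x⌉ : ℝ) := Int.le_ceil x
  have hyf : ((⌊y⌋ : ℤ) : ℝ) ≤ y := Int.floor_le y
  rcases le_or_gt (⌊y⌋ + 1 - ⌈x⌉) 0 with hz | hz
  · have : (⌊y⌋ + 1 - ⌈x⌉).toNat = 0 := Int.toNat_of_nonpos hz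
    rw [hIcc, this] at hcard
    have : ((Finset.Icc A B).filter P).card = 0 := Nat.le_zero.mp hcard
    rw [this]
    simp
    linarith
  · have htn : ((⌊y⌋ + 1 - ⌈x⌉).toNat : ℤ) = ⌊y⌋ + 1 - ⌈x⌉ := Int.toNat_of_nonneg hz.le
    have : (((Finset.Icc A B).filter P).card : ℝ) ≤ (((⌊y⌋ + 1 - ⌈x⌉).toNat : ℕ) : ℝ) := by
      exact_mod_cast hIcc ▸ hcard
    have h2 : (((⌊y⌋ + 1 - ⌈x⌉).toNat : ℕ) : ℝ) = ((⌊y⌋ : ℝ) + 1 - (⌈x⌉ : ℝ)) := by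
      exact_mod_cast congrArg (Int.cast : ℤ → ℝ) htn
    rw [h2] at this
    linarith

lemma sum_le_sqrt_card_mul (S : Finset ℤ) (f : ℤ → ℝ) (hf : ∀ ν ∈ S, 0 ≤ f ν) :
    ∑ ν ∈ S, f ν ≤ Real.sqrt ((S.card : ℝ) * ∑ ν ∈ S, (f ν)^2) := by
  have h1 : (∑ ν ∈ S, f ν)^2 ≤ (S.card : ℝ) * ∑ ν ∈ S, (f ν)^2 := by
    exact_mod_cast sq_sum_le_card_mul_sum_sq (s := S) (f := f)
  have h2 : 0 ≤ ∑ ν ∈ S, f ν := Finset.sum_nonneg hf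
  calc ∑ ν ∈ S, f ν = Real.sqrt ((∑ ν ∈ S, f ν)^2) := (Real.sqrt_sq h2).symm
    _ ≤ Real.sqrt ((S.card : ℝ) * ∑ ν ∈ S, (f ν)^2) := Real.sqrt_le_sqrt h1

end PeripheryHelpers

/-- Condition (M) for `g = h''` with explicit constants `c` and `C`. -/
def ConditionMWith (g : ℝ → ℝ) (c C : ℝ) : Prop :=
  ∃ m₀ mπ : ℝ → ℝ,
    (∀ t ∈ Set.Ioo (0 : ℝ) (4 * c), 0 < m₀ t ∧ 0 < mπ t) ∧
    MonotoneOn m₀ (Set.Ioo (0 : ℝ) (4 * c)) ∧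
    MonotoneOn mπ (Set.Ioo (0 : ℝ) (4 * c)) ∧
    (∀ t ∈ Set.Ioo (0 : ℝ) (2 * c), m₀ (2 * t) ≤ C * m₀ t ∧ mπ (2 * t) ≤ C * mπ t) ∧
    (∀ t ∈ Set.Ioo (0 : ℝ) (4 * c),
      m₀ t ≤ g t ∧ g t ≤ C * m₀ t ∧ mπ t ≤ g (π - t) ∧ g (π - t) ≤ C * mπ t)

set_option maxHeartbeats 3000000

/-- Periphery terms estimate: the sum of `|a_{n,ν}|` over
`n h'(0) + 1 < ν < n h'(2δ)` (and symmetrically over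
`n h'(π-2δ) < ν < n h'(π) - 1`) is at most `C'(1 + n δ² ω(δ))`. -/
theorem periphery_terms_sum_le
    (h : ℝ → ℝ) (hreg : ContDiff ℝ 2 h)
    (hper : ∃ k : ℤ, ∀ t : ℝ, h (t + 2 * π) = h t + 2 * (k : ℝ) * π)
    (hodd : ∀ t : ℝ, h (-t) = -h t)
    (hpos : ∀ t ∈ Set.Ioo (0 : ℝ) π, 0 < deriv (deriv h) t)
    (c C : ℝ) (hc : 0 < c) (hcπ : c < π / 8)
    (hM : ConditionMWith (deriv (deriv h)) c C)
    (ω : ℝ → ℝ)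
    (hω : ∀ δ : ℝ, ω δ = sSup {v : ℝ | ∃ x ∈ Set.Icc (0 : ℝ) π,
      ∃ y ∈ Set.Icc (0 : ℝ) π, |x - y| < δ ∧
        v = |deriv (deriv h) x - deriv (deriv h) y|}) :
    ∃ C' > (0 : ℝ), ∀ n : ℕ, 0 < n → ∀ δ : ℝ, 0 < δ → δ < c →
      (∑ ν ∈ (Finset.Icc ⌈(n : ℝ) * deriv h 0⌉ ⌊(n : ℝ) * deriv h (2 * δ)⌋).filter
          (fun ν : ℤ => (n : ℝ) * deriv h 0 + 1 < (ν : ℝ) ∧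
            (ν : ℝ) < (n : ℝ) * deriv h (2 * δ)),
        ‖((1 / (2 * π)) * ∫ t in (-π)..π,
          Complex.exp (Complex.I * ((n : ℂ) * (h t : ℂ) - (ν : ℂ) * (t : ℂ))))‖)
        ≤ C' * (1 + n * δ ^ 2 * ω δ) ∧
      (∑ ν ∈ (Finset.Icc ⌈(n : ℝ) * deriv h (π - 2 * δ)⌉
            ⌊(n : ℝ) * deriv h π⌋).filter
          (fun ν : ℤ => (n : ℝ) * deriv h (π - 2 * δ) < (ν : ℝ) ∧
            (ν : ℝ) < (n : ℝ) * deriv h π - 1),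
        ‖((1 / (2 * π)) * ∫ t in (-π)..π,
          Complex.exp (Complex.I * ((n : ℂ) * (h t : ℂ) - (ν : ℂ) * (t : ℂ))))‖)
        ≤ C' * (1 + n * δ ^ 2 * ω δ) := by
  classical
  obtain ⟨k, hper⟩ := hper
  -- basic differentiability facts
  have h2 : ContDiff ℝ (1 + 1 : ℕ) h := by norm_num; exact_mod_cast hreg
  have hdiff1 : Differentiable ℝ h := hreg.differentiable (by norm_num)
  have hcd1 : ContDiff ℝ 1 (deriv h) := by
    have := (contDiff_succ_iff_deriv (n := 1)).mp (by exact_mod_cast h2)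
    exact this.2.2
  have hdiff2 : Differentiable ℝ (deriv h) := hcd1.differentiable (by norm_num)
  have hcont2 : Continuous (deriv (deriv h)) := by
    have := (contDiff_succ_iff_deriv (n := 0)).mp (by exact_mod_cast hcd1)
    exact this.2.2.continuous
  have hd1 : ∀ t, HasDerivAt h (deriv h t) t := fun t => (hdiff1 t).hasDerivAt
  have hd2 : ∀ t, HasDerivAt (deriv h) (deriv (deriv h) t) t := fun t => (hdiff2 t).hasDerivAt
  -- parity and periodicity
  have hteven : ∀ t, deriv h (-t) = deriv h t := by
    intro t
    have l : HasDerivAt (fun s : ℝ => h (-s)) (deriv h (-t) * (-1)) t :=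
      (hd1 (-t)).comp t (hasDerivAt_neg t)
    have r : HasDerivAt (fun s : ℝ => h (-s)) (-(deriv h t)) t := by
      have : (fun s : ℝ => h (-s)) = fun s : ℝ => -(h s) := funext hodd
      rw [this]; exact (hd1 t).neg
    have := l.unique r
    linarith
  have htodd'' : ∀ t, deriv (deriv h) (-t) = -(deriv (deriv h) t) := by
    intro t
    have l : HasDerivAt (fun s : ℝ => deriv h (-s)) (deriv (deriv h) (-t) * (-1)) t :=
      (hd2 (-t)).comp t (hasDerivAt_neg t)
    have r : HasDerivAt (fun s : ℝ => deriv h (-s)) (deriv (deriv h) t) t := by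
      have : (fun s : ℝ => deriv h (-s)) = fun s : ℝ => deriv h s := funext hteven
      rw [this]; exact hd2 t
    have := l.unique r
    linarith
  have hper1 : ∀ t, deriv h (t + 2*π) = deriv h t := by
    intro t
    have l : HasDerivAt (fun s : ℝ => h (s + 2*π)) (deriv h (t + 2*π) * 1) t :=
      (hd1 (t + 2*π)).comp t ((hasDerivAt_id t).add_const (2*π))
    have r : HasDerivAt (fun s : ℝ => h (s + 2*π)) (deriv h t) t := by
      have : (fun s : ℝ => h (s + 2*π)) = fun s : ℝ => h s + 2*(k:ℝ)*π := funext hper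
      rw [this]; exact (hd1 t).add_const _
    have := l.unique r
    linarith
  have hper2 : ∀ t, deriv (deriv h) (t + 2*π) = deriv (deriv h) t := by
    intro t
    have l : HasDerivAt (fun s : ℝ => deriv h (s + 2*π)) (deriv (deriv h) (t + 2*π) * 1) t :=
      HasDerivAt.comp (h₂ := deriv h) t (hd2 (t + 2*π)) ((hasDerivAt_id t).add_const (2*π))
    have r : HasDerivAt (fun s : ℝ => deriv h (s + 2*π)) (deriv (deriv h) t) t := by
      have : (fun s : ℝ => deriv h (s + 2*π)) = fun s : ℝ => deriv h s := funext hper1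
      rw [this]; exact hd2 t
    have := l.unique r
    linarith
  have h''0 : deriv (deriv h) 0 = 0 := by have := htodd'' 0; simp at this; linarith [this]
  have h''π : deriv (deriv h) π = 0 := by
    have h1 := hper2 (-π)
    have h2' := htodd'' π
    have he : (-π) + 2*π = π := by ring
    rw [he] at h1
    linarith
  have h''nonneg : ∀ t ∈ Set.Icc (0:ℝ) π, 0 ≤ deriv (deriv h) t := by
    intro t ht
    rcases eq_or_lt_of_le ht.1 with h0 | h0
    · rw [← h0]; rw [h''0]
    rcases eq_or_lt_of_le ht.2 with hp | hp
    · rw [hp, h''π]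
    exact (hpos t ⟨h0, hp⟩).le
  have h''nonpos : ∀ t ∈ Set.Icc (-π) (0:ℝ), deriv (deriv h) t ≤ 0 := by
    intro t ht
    have h1 := h''nonneg (-t) ⟨by linarith [ht.2], by linarith [ht.1]⟩
    have h2' := htodd'' t
    linarith
  -- FTC facts
  have hftc : ∀ a b : ℝ, (∫ t in a..b, deriv (deriv h) t) = deriv h b - deriv h a := by
    intro a b
    exact intervalIntegral.integral_eq_sub_of_hasDerivAt (fun t _ => hd2 t)
      (hcont2.intervalIntegrable a b)
  have hmono' : ∀ a b : ℝ, a ≤ b → (∀ t ∈ Set.Icc a b, 0 ≤ deriv (deriv h) t) →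
      deriv h a ≤ deriv h b := by
    intro a b hab hnn
    have hnn2 : 0 ≤ ∫ t in a..b, deriv (deriv h) t :=
      intervalIntegral.integral_nonneg hab hnn
    rw [hftc] at hnn2
    linarith
  have hlow : ∀ a b m : ℝ, a ≤ b → (∀ t ∈ Set.Icc a b, m ≤ deriv (deriv h) t) →
      (b - a) * m ≤ deriv h b - deriv h a := by
    intro a b m hab hm
    have h1 : (∫ t in a..b, m) ≤ ∫ t in a..b, deriv (deriv h) t := by
      apply intervalIntegral.integral_mono_on hab (intervalIntegrable_const)
        (hcont2.intervalIntegrable a b) hm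
    rw [intervalIntegral.integral_const, smul_eq_mul, hftc] at h1
    linarith
  have hup : ∀ a b m : ℝ, a ≤ b → (∀ t ∈ Set.Icc a b, deriv (deriv h) t ≤ m) →
      deriv h b - deriv h a ≤ (b - a) * m := by
    intro a b m hab hm
    have h1 : (∫ t in a..b, deriv (deriv h) t) ≤ ∫ t in a..b, m := by
      apply intervalIntegral.integral_mono_on hab (hcont2.intervalIntegrable a b)
        intervalIntegrable_const hm
    rw [intervalIntegral.integral_const, smul_eq_mul, hftc] at h1
    linarith
  -- condition (M) data
  obtain ⟨m₀, mπ, hMpos, hm0, hmπ, hdbl, hsand⟩ := hM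
  have hCpos : 0 < C := by
    have hmem1 : c ∈ Set.Ioo (0:ℝ) (2*c) := ⟨hc, by linarith⟩
    have hmem2 : (2*c) ∈ Set.Ioo (0:ℝ) (4*c) := ⟨by linarith, by linarith⟩
    have hmem3 : c ∈ Set.Ioo (0:ℝ) (4*c) := ⟨hc, by linarith⟩
    have h1 := (hdbl c hmem1).1
    have h2' := (hMpos (2*c) hmem2).1
    have h3 := (hMpos c hmem3).1
    nlinarith
  -- modulus of continuity facts
  obtain ⟨M, hMB⟩ := IsCompact.exists_bound_of_continuousOn isCompact_Icc
    (hcont2.continuousOn (s := Set.Icc (0:ℝ) π))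
  have hπ3 : (3:ℝ) < π := by linarith [Real.pi_gt_three]
  refine ⟨3 + 3*C, by linarith, ?_⟩
  intro n hn δ hδ hδc
  have hN1 : (1:ℝ) ≤ (n:ℝ) := by exact_mod_cast hn
  have hδπ : 3*δ < π := by nlinarith
  have h2δ4c : 2*δ < 4*c := by linarith
  -- ω facts for this δ
  have hbdd : BddAbove {v : ℝ | ∃ x ∈ Set.Icc (0:ℝ) π, ∃ y ∈ Set.Icc (0:ℝ) π,
      |x - y| < δ ∧ v = |deriv (deriv h) x - deriv (deriv h) y|} := by
    refine ⟨2*M, ?_⟩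
    rintro v ⟨x, hx, y, hy, -, rfl⟩
    have b1 := hMB x hx
    have b2 := hMB y hy
    rw [Real.norm_eq_abs] at b1 b2
    calc |deriv (deriv h) x - deriv (deriv h) y|
        ≤ |deriv (deriv h) x| + |deriv (deriv h) y| := abs_sub _ _
      _ ≤ 2*M := by linarith
  have hωge : ∀ x ∈ Set.Icc (0:ℝ) π, ∀ y ∈ Set.Icc (0:ℝ) π, |x - y| < δ →
      |deriv (deriv h) x - deriv (deriv h) y| ≤ ω δ := by
    intro x hx y hy hxy
    rw [hω δ]
    exact le_csSup hbdd ⟨x, hx, y, hy, hxy, rfl⟩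
  have hωnn : 0 ≤ ω δ := by
    rw [hω δ]
    apply le_csSup hbdd
    exact ⟨0, ⟨le_refl _, Real.pi_pos.le⟩, 0, ⟨le_refl _, Real.pi_pos.le⟩,
      by simpa using hδ, by simp⟩
  -- telescoping bounds for h''
  have htel0 : ∀ t ∈ Set.Icc (0:ℝ) (2*δ), deriv (deriv h) t ≤ 3 * ω δ := by
    intro t ht
    have htπ : t ≤ π := by nlinarith [ht.2]
    have hm1 : t ∈ Set.Icc (0:ℝ) π := ⟨ht.1, htπ⟩
    have hm2 : 2*t/3 ∈ Set.Icc (0:ℝ) π := ⟨by linarith [ht.1], by linarith⟩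
    have hm3 : t/3 ∈ Set.Icc (0:ℝ) π := ⟨by linarith [ht.1], by linarith⟩
    have hm4 : (0:ℝ) ∈ Set.Icc (0:ℝ) π := ⟨le_refl _, Real.pi_pos.le⟩
    have hd3 : t/3 < δ := by linarith [ht.2]
    have ha1 : |t - 2*t/3| < δ := by
      rw [(show t - 2*t/3 = t/3 by ring), abs_of_nonneg (by linarith [ht.1])]
      exact hd3
    have ha2 : |2*t/3 - t/3| < δ := by
      rw [(show 2*t/3 - t/3 = t/3 by ring), abs_of_nonneg (by linarith [ht.1])]
      exact hd3
    have ha3 : |t/3 - 0| < δ := by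
      rw [(show t/3 - (0:ℝ) = t/3 by ring), abs_of_nonneg (by linarith [ht.1])]
      exact hd3
    have e1 := hωge t hm1 (2*t/3) hm2 ha1
    have e2 := hωge (2*t/3) hm2 (t/3) hm3 ha2
    have e3 := hωge (t/3) hm3 0 hm4 ha3
    have l1 := le_abs_self (deriv (deriv h) t - deriv (deriv h) (2*t/3))
    have l2 := le_abs_self (deriv (deriv h) (2*t/3) - deriv (deriv h) (t/3))
    have l3 := le_abs_self (deriv (deriv h) (t/3) - deriv (deriv h) 0)
    rw [h''0] at l3 e3
    linarith
  have htelπ : ∀ t ∈ Set.Icc (π - 2*δ) π, deriv (deriv h) t ≤ 3 * ω δ := by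
    intro t ht
    have ht0 : 0 ≤ t := by nlinarith [ht.1]
    have hm1 : t ∈ Set.Icc (0:ℝ) π := ⟨ht0, ht.2⟩
    have hm2 : t + (π - t)/3 ∈ Set.Icc (0:ℝ) π := ⟨by linarith, by linarith [ht.2]⟩
    have hm3 : t + 2*(π - t)/3 ∈ Set.Icc (0:ℝ) π := ⟨by linarith, by linarith [ht.2]⟩
    have hm4 : π ∈ Set.Icc (0:ℝ) π := ⟨Real.pi_pos.le, le_refl _⟩
    have hd3 : (π - t)/3 < δ := by linarith [ht.1]
    have hnn : 0 ≤ (π - t)/3 := by linarith [ht.2]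
    have hb1 : |t - (t + (π - t)/3)| < δ := by
      rw [(show t - (t + (π - t)/3) = -((π - t)/3) by ring), abs_neg, abs_of_nonneg hnn]
      exact hd3
    have hb2 : |t + (π - t)/3 - (t + 2*(π - t)/3)| < δ := by
      rw [(show t + (π - t)/3 - (t + 2*(π - t)/3) = -((π - t)/3) by ring), abs_neg,
        abs_of_nonneg hnn]
      exact hd3
    have hb3 : |t + 2*(π - t)/3 - π| < δ := by
      rw [(show t + 2*(π - t)/3 - π = -((π - t)/3) by ring), abs_neg, abs_of_nonneg hnn]
      exact hd3
    have e1 := hωge t hm1 (t + (π - t)/3) hm2 hb1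
    have e2 := hωge (t + (π - t)/3) hm2 (t + 2*(π - t)/3) hm3 hb2
    have e3 := hωge (t + 2*(π - t)/3) hm3 π hm4 hb3
    have l1 := le_abs_self (deriv (deriv h) t - deriv (deriv h) (t + (π - t)/3))
    have l2 := le_abs_self (deriv (deriv h) (t + (π - t)/3) - deriv (deriv h) (t + 2*(π - t)/3))
    have l3 := le_abs_self (deriv (deriv h) (t + 2*(π - t)/3) - deriv (deriv h) π)
    rw [h''π] at l3 e3
    linarith
  have hA : 0 ≤ (n:ℝ) * δ^2 * ω δ := by positivity
  -- the common unimodular function F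
  set F : ℝ → ℂ := fun t => Complex.exp (Complex.I * (n:ℂ) * (h t : ℂ)) with hF
  have hFc : Continuous F := by
    apply Complex.continuous_exp.comp
    exact (continuous_const.mul (Complex.continuous_ofReal.comp hreg.continuous))
  have hF1 : ∀ t, ‖F t‖ = 1 := by
    intro t
    rw [hF]
    simp [Complex.norm_exp]
  have hEc : ∀ ν : ℤ, Continuous (fun t : ℝ =>
      Complex.exp (Complex.I * ((n:ℂ) * (h t : ℂ) - (ν:ℂ) * (t:ℂ)))) := by
    intro ν
    apply Complex.continuous_exp.comp
    apply continuous_const.mul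
    exact ((continuous_const.mul (Complex.continuous_ofReal.comp hreg.continuous))).sub
      (continuous_const.mul Complex.continuous_ofReal)
  have hEsplit : ∀ (ν : ℤ) (t : ℝ), Complex.exp (Complex.I * ((n:ℂ) * (h t : ℂ) - (ν:ℂ) * (t:ℂ)))
      = F t * Complex.exp (-(Complex.I * (ν:ℂ) * (t:ℂ))) := by
    intro ν t
    rw [hF, ← Complex.exp_add]
    congr 1
    ring
  have habsfac : ‖(1 / (2 * (π:ℂ)))‖ = 1 / (2*π) := by
    rw [norm_div, norm_one, norm_mul, Complex.norm_two, Complex.norm_real, Real.norm_eq_abs,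
      abs_of_pos Real.pi_pos]
  have h2πpos : (0:ℝ) < 2*π := by linarith
  constructor
  · -- FIRST SUM
    have m2δpos : 0 < m₀ (2*δ) := (hMpos (2*δ) ⟨by linarith, h2δ4c⟩).1
    have hNpos : (0:ℝ) < (n:ℝ) := by linarith
    have hGpos : 0 < (n:ℝ)*δ*m₀ (2*δ) := by positivity
    have hm2δπ : deriv h 0 ≤ deriv h (2*δ) :=
      hmono' 0 (2*δ) (by linarith) (fun s hs => h''nonneg s ⟨hs.1, by nlinarith [hs.2]⟩)
    -- cardinality bound for the index set
    have hScard : (((Finset.Icc ⌈(n : ℝ) * deriv h 0⌉ ⌊(n : ℝ) * deriv h (2 * δ)⌋).filter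
        (fun ν : ℤ => (n : ℝ) * deriv h 0 + 1 < (ν : ℝ) ∧
          (ν : ℝ) < (n : ℝ) * deriv h (2 * δ))).card : ℝ)
        ≤ (n:ℝ) * (deriv h (2*δ) - deriv h 0) := by
      have hxy : (n:ℝ) * deriv h 0 + 1 ≤ (n:ℝ) * deriv h (2*δ) + 1 := by
        have := mul_le_mul_of_nonneg_left hm2δπ hNpos.le
        linarith
      have := card_filter_le_aux ((n:ℝ) * deriv h 0 + 1) ((n:ℝ) * deriv h (2*δ)) hxy
        ⌈(n : ℝ) * deriv h 0⌉ ⌊(n : ℝ) * deriv h (2 * δ)⌋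
        (fun ν : ℤ => (n : ℝ) * deriv h 0 + 1 < (ν : ℝ) ∧
          (ν : ℝ) < (n : ℝ) * deriv h (2 * δ))
        (fun ν hν => ⟨hν.1.le, hν.2.le⟩)
      have hexp : (n:ℝ)*(deriv h (2*δ) - deriv h 0)
          = (n:ℝ)*deriv h (2*δ) - (n:ℝ)*deriv h 0 := by ring
      linarith
    -- lower bound on the phase derivative away from the stationary region
    have hlbR : ∀ ν : ℤ, (ν:ℝ) ≤ (n:ℝ) * deriv h (2*δ) → ∀ t ∈ Set.Icc (3*δ) π,
        (n:ℝ)*δ*m₀ (2*δ) ≤ |(n:ℝ) * deriv h t - (ν:ℝ)| := by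
      intro ν hν2 t ht
      have k1 : (3*δ - 2*δ) * m₀ (2*δ) ≤ deriv h (3*δ) - deriv h (2*δ) := by
        apply hlow _ _ _ (by linarith)
        intro s hs
        have hs2 : s ∈ Set.Ioo (0:ℝ) (4*c) := ⟨by linarith [hs.1], by
          have := hs.2; linarith⟩
        calc m₀ (2*δ) ≤ m₀ s := hm0 ⟨by linarith, h2δ4c⟩ hs2 hs.1
          _ ≤ deriv (deriv h) s := (hsand s hs2).1
      have k2 : deriv h (3*δ) ≤ deriv h t :=
        hmono' _ _ ht.1 (fun s hs => h''nonneg s ⟨by linarith [hs.1], le_trans hs.2 ht.2⟩)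
      have hX : (n:ℝ)*δ*m₀ (2*δ) ≤ (n:ℝ) * deriv h t - (ν:ℝ) := by
        have c1 : (n:ℝ)*((3*δ - 2*δ) * m₀ (2*δ)) ≤ (n:ℝ)*(deriv h (3*δ) - deriv h (2*δ)) :=
          mul_le_mul_of_nonneg_left k1 hNpos.le
        have c2 : (n:ℝ)*(deriv h (3*δ) - deriv h (2*δ)) ≤ (n:ℝ)*(deriv h t - deriv h (2*δ)) :=
          mul_le_mul_of_nonneg_left (by linarith) hNpos.le
        nlinarith [c1, c2]
      exact le_trans hX (le_abs_self _)
    -- oscillatory tail bounds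
    have tailR : ∀ ν : ℤ, (ν:ℝ) ≤ (n:ℝ) * deriv h (2*δ) →
        ‖∫ t in (3*δ)..π, Complex.exp (Complex.I * ((n:ℂ)*(h t:ℂ) - (ν:ℂ)*(t:ℂ)))‖
          ≤ 4/((n:ℝ)*δ*m₀ (2*δ)) := by
      intro ν hν2
      have hcongr : ∀ t ∈ Set.uIcc (3*δ) π,
          Complex.exp (Complex.I * ((n:ℂ)*(h t:ℂ) - (ν:ℂ)*(t:ℂ)))
          = Complex.exp (Complex.I * ((((n:ℝ)* h t - (ν:ℝ)*t : ℝ)):ℂ)) := by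
        intro t _
        congr 1
        push_cast
        ring
      rw [intervalIntegral.integral_congr hcongr]
      have huI : Set.uIcc (3*δ) π = Set.Icc (3*δ) π := Set.uIcc_of_le (by linarith)
      apply osc_bound (fun t => (n:ℝ)* h t - (ν:ℝ)*t) (fun t => (n:ℝ) * deriv h t - (ν:ℝ))
        (fun t => (n:ℝ) * deriv (deriv h) t) (3*δ) π ((n:ℝ)*δ*m₀ (2*δ)) (by linarith) hGpos
      · intro t _
        exact (((hd1 t).const_mul ((n:ℝ))).sub
          ((hasDerivAt_id t).const_mul ((ν:ℝ)))).congr_deriv (by ring)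
      · intro t _
        exact ((hd2 t).const_mul ((n:ℝ))).sub_const _
      · exact (continuous_const.mul hcont2).continuousOn
      · rw [huI]; exact hlbR ν hν2
      · left
        intro t ht
        rw [huI] at ht
        exact mul_nonneg hNpos.le (h''nonneg t ⟨by linarith [ht.1], ht.2⟩)
    have tailL : ∀ ν : ℤ, (ν:ℝ) ≤ (n:ℝ) * deriv h (2*δ) →
        ‖∫ t in (-π)..(-(3*δ)), Complex.exp (Complex.I * ((n:ℂ)*(h t:ℂ) - (ν:ℂ)*(t:ℂ)))‖
          ≤ 4/((n:ℝ)*δ*m₀ (2*δ)) := by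
      intro ν hν2
      have hcongr : ∀ t ∈ Set.uIcc (-π) (-(3*δ)),
          Complex.exp (Complex.I * ((n:ℂ)*(h t:ℂ) - (ν:ℂ)*(t:ℂ)))
          = Complex.exp (Complex.I * ((((n:ℝ)* h t - (ν:ℝ)*t : ℝ)):ℂ)) := by
        intro t _
        congr 1
        push_cast
        ring
      rw [intervalIntegral.integral_congr hcongr]
      have huI : Set.uIcc (-π) (-(3*δ)) = Set.Icc (-π) (-(3*δ)) := Set.uIcc_of_le (by linarith)
      apply osc_bound (fun t => (n:ℝ)* h t - (ν:ℝ)*t) (fun t => (n:ℝ) * deriv h t - (ν:ℝ))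
        (fun t => (n:ℝ) * deriv (deriv h) t) (-π) (-(3*δ)) ((n:ℝ)*δ*m₀ (2*δ)) (by linarith) hGpos
      · intro t _
        exact (((hd1 t).const_mul ((n:ℝ))).sub
          ((hasDerivAt_id t).const_mul ((ν:ℝ)))).congr_deriv (by ring)
      · intro t _
        exact ((hd2 t).const_mul ((n:ℝ))).sub_const _
      · exact (continuous_const.mul hcont2).continuousOn
      · rw [huI]
        intro t ht
        have hmt : -t ∈ Set.Icc (3*δ) π := ⟨by linarith [ht.2], by linarith [ht.1]⟩
        have := hlbR ν hν2 (-t) hmt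
        rw [hteven t] at this
        exact this
      · right
        intro t ht
        rw [huI] at ht
        exact mul_nonpos_of_nonneg_of_nonpos hNpos.le
          (h''nonpos t ⟨ht.1, by linarith [ht.2]⟩)
    -- splitting of the full integral
    have hsplitI : ∀ ν : ℤ, (∫ t in (-π)..π,
        Complex.exp (Complex.I * ((n:ℂ)*(h t:ℂ) - (ν:ℂ)*(t:ℂ))))
        = (∫ t in (-π)..(-(3*δ)), Complex.exp (Complex.I * ((n:ℂ)*(h t:ℂ) - (ν:ℂ)*(t:ℂ))))
          + (∫ t in (-(3*δ))..(3*δ), Complex.exp (Complex.I * ((n:ℂ)*(h t:ℂ) - (ν:ℂ)*(t:ℂ))))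
          + (∫ t in (3*δ)..π, Complex.exp (Complex.I * ((n:ℂ)*(h t:ℂ) - (ν:ℂ)*(t:ℂ)))) := by
      intro ν
      have i1 : IntervalIntegrable (fun t : ℝ =>
          Complex.exp (Complex.I * ((n:ℂ)*(h t:ℂ) - (ν:ℂ)*(t:ℂ)))) volume (-π) (-(3*δ)) :=
        (hEc ν).intervalIntegrable _ _
      have i2 : IntervalIntegrable (fun t : ℝ =>
          Complex.exp (Complex.I * ((n:ℂ)*(h t:ℂ) - (ν:ℂ)*(t:ℂ)))) volume (-(3*δ)) (3*δ) :=
        (hEc ν).intervalIntegrable _ _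
      have i12 : IntervalIntegrable (fun t : ℝ =>
          Complex.exp (Complex.I * ((n:ℂ)*(h t:ℂ) - (ν:ℂ)*(t:ℂ)))) volume (-π) (3*δ) :=
        (hEc ν).intervalIntegrable _ _
      have i3 : IntervalIntegrable (fun t : ℝ =>
          Complex.exp (Complex.I * ((n:ℂ)*(h t:ℂ) - (ν:ℂ)*(t:ℂ)))) volume (3*δ) π :=
        (hEc ν).intervalIntegrable _ _
      rw [intervalIntegral.integral_add_adjacent_intervals i1 i2,
        intervalIntegral.integral_add_adjacent_intervals i12 i3]
    -- Bessel bound on the middle terms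
    have hBess : ∑ ν ∈ (Finset.Icc ⌈(n : ℝ) * deriv h 0⌉ ⌊(n : ℝ) * deriv h (2 * δ)⌋).filter
        (fun ν : ℤ => (n : ℝ) * deriv h 0 + 1 < (ν : ℝ) ∧
          (ν : ℝ) < (n : ℝ) * deriv h (2 * δ)),
        ‖∫ t in (-(3*δ))..(3*δ), Complex.exp (Complex.I * ((n:ℂ)*(h t:ℂ) - (ν:ℂ)*(t:ℂ)))‖^2
        ≤ 12*π*δ := by
      have hb := bessel F hFc hF1 (-(3*δ)) (3*δ) (by linarith) (by linarith)
        ((Finset.Icc ⌈(n : ℝ) * deriv h 0⌉ ⌊(n : ℝ) * deriv h (2 * δ)⌋).filter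
          (fun ν : ℤ => (n : ℝ) * deriv h 0 + 1 < (ν : ℝ) ∧
            (ν : ℝ) < (n : ℝ) * deriv h (2 * δ)))
      have heq : ∀ ν : ℤ,
          (∫ t in (-(3*δ))..(3*δ), Complex.exp (Complex.I * ((n:ℂ)*(h t:ℂ) - (ν:ℂ)*(t:ℂ))))
          = ∫ t in (-(3*δ))..(3*δ), F t * Complex.exp (-(Complex.I * (ν:ℂ) * (t:ℂ))) :=
        fun ν => intervalIntegral.integral_congr (fun t _ => hEsplit ν t)
      rw [show (2:ℝ)*π*(3*δ - -(3*δ)) = 12*π*δ by ring] at hb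
      exact le_of_eq_of_le (Finset.sum_congr rfl (fun ν _ => by rw [heq ν])) hb
    -- per-term bound
    have hper_term : ∀ ν ∈ (Finset.Icc ⌈(n : ℝ) * deriv h 0⌉
        ⌊(n : ℝ) * deriv h (2 * δ)⌋).filter
        (fun ν : ℤ => (n : ℝ) * deriv h 0 + 1 < (ν : ℝ) ∧
          (ν : ℝ) < (n : ℝ) * deriv h (2 * δ)),
        ‖((1 / (2 * π)) * ∫ t in (-π)..π,
          Complex.exp (Complex.I * ((n : ℂ) * (h t : ℂ) - (ν : ℂ) * (t : ℂ))))‖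
        ≤ (1/(2*π)) * ((‖∫ t in (-(3*δ))..(3*δ),
            Complex.exp (Complex.I * ((n:ℂ)*(h t:ℂ) - (ν:ℂ)*(t:ℂ)))‖)
            + 8/((n:ℝ)*δ*m₀ (2*δ))) := by
      intro ν hν
      have hν2 : (ν:ℝ) ≤ (n:ℝ) * deriv h (2*δ) := ((Finset.mem_filter.mp hν).2).2.le
      rw [norm_mul, habsfac]
      apply mul_le_mul_of_nonneg_left _ (by positivity)
      calc ‖∫ t in (-π)..π, Complex.exp (Complex.I * ((n:ℂ)*(h t:ℂ) - (ν:ℂ)*(t:ℂ)))‖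
          = ‖(∫ t in (-π)..(-(3*δ)), Complex.exp (Complex.I * ((n:ℂ)*(h t:ℂ) - (ν:ℂ)*(t:ℂ))))
            + (∫ t in (-(3*δ))..(3*δ), Complex.exp (Complex.I * ((n:ℂ)*(h t:ℂ) - (ν:ℂ)*(t:ℂ))))
            + (∫ t in (3*δ)..π, Complex.exp (Complex.I * ((n:ℂ)*(h t:ℂ) - (ν:ℂ)*(t:ℂ))))‖ := by
              rw [hsplitI ν]
        _ ≤ ‖(∫ t in (-π)..(-(3*δ)), Complex.exp (Complex.I * ((n:ℂ)*(h t:ℂ) - (ν:ℂ)*(t:ℂ))))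
            + (∫ t in (-(3*δ))..(3*δ), Complex.exp (Complex.I * ((n:ℂ)*(h t:ℂ) - (ν:ℂ)*(t:ℂ))))‖
            + ‖∫ t in (3*δ)..π, Complex.exp (Complex.I * ((n:ℂ)*(h t:ℂ) - (ν:ℂ)*(t:ℂ)))‖ :=
              norm_add_le _ _
        _ ≤ (‖∫ t in (-π)..(-(3*δ)), Complex.exp (Complex.I * ((n:ℂ)*(h t:ℂ) - (ν:ℂ)*(t:ℂ)))‖
            + ‖∫ t in (-(3*δ))..(3*δ), Complex.exp (Complex.I * ((n:ℂ)*(h t:ℂ) - (ν:ℂ)*(t:ℂ)))‖)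
            + ‖∫ t in (3*δ)..π, Complex.exp (Complex.I * ((n:ℂ)*(h t:ℂ) - (ν:ℂ)*(t:ℂ)))‖ := by
              gcongr
              exact norm_add_le _ _
        _ ≤ (4/((n:ℝ)*δ*m₀ (2*δ))
            + ‖∫ t in (-(3*δ))..(3*δ), Complex.exp (Complex.I * ((n:ℂ)*(h t:ℂ) - (ν:ℂ)*(t:ℂ)))‖)
            + 4/((n:ℝ)*δ*m₀ (2*δ)) := by
              gcongr
              · exact tailL ν hν2
              · exact tailR ν hν2
        _ = ‖∫ t in (-(3*δ))..(3*δ), Complex.exp (Complex.I * ((n:ℂ)*(h t:ℂ) - (ν:ℂ)*(t:ℂ)))‖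
            + 8/((n:ℝ)*δ*m₀ (2*δ)) := by ring
    -- assemble
    calc (∑ ν ∈ (Finset.Icc ⌈(n : ℝ) * deriv h 0⌉ ⌊(n : ℝ) * deriv h (2 * δ)⌋).filter
          (fun ν : ℤ => (n : ℝ) * deriv h 0 + 1 < (ν : ℝ) ∧
            (ν : ℝ) < (n : ℝ) * deriv h (2 * δ)),
          ‖((1 / (2 * π)) * ∫ t in (-π)..π,
            Complex.exp (Complex.I * ((n : ℂ) * (h t : ℂ) - (ν : ℂ) * (t : ℂ))))‖)
        ≤ ∑ ν ∈ (Finset.Icc ⌈(n : ℝ) * deriv h 0⌉ ⌊(n : ℝ) * deriv h (2 * δ)⌋).filter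
          (fun ν : ℤ => (n : ℝ) * deriv h 0 + 1 < (ν : ℝ) ∧
            (ν : ℝ) < (n : ℝ) * deriv h (2 * δ)),
          ((1/(2*π)) * ((‖∫ t in (-(3*δ))..(3*δ),
            Complex.exp (Complex.I * ((n:ℂ)*(h t:ℂ) - (ν:ℂ)*(t:ℂ)))‖)
            + 8/((n:ℝ)*δ*m₀ (2*δ)))) := Finset.sum_le_sum hper_term
      _ = (1/(2*π)) * ((∑ ν ∈ (Finset.Icc ⌈(n : ℝ) * deriv h 0⌉
            ⌊(n : ℝ) * deriv h (2 * δ)⌋).filter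
            (fun ν : ℤ => (n : ℝ) * deriv h 0 + 1 < (ν : ℝ) ∧
              (ν : ℝ) < (n : ℝ) * deriv h (2 * δ)),
            ‖∫ t in (-(3*δ))..(3*δ),
              Complex.exp (Complex.I * ((n:ℂ)*(h t:ℂ) - (ν:ℂ)*(t:ℂ)))‖)
            + (((Finset.Icc ⌈(n : ℝ) * deriv h 0⌉ ⌊(n : ℝ) * deriv h (2 * δ)⌋).filter
            (fun ν : ℤ => (n : ℝ) * deriv h 0 + 1 < (ν : ℝ) ∧
              (ν : ℝ) < (n : ℝ) * deriv h (2 * δ))).card : ℝ) * (8/((n:ℝ)*δ*m₀ (2*δ)))) := by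
          rw [← Finset.mul_sum, Finset.sum_add_distrib, Finset.sum_const, nsmul_eq_mul]
      _ ≤ (1/(2*π)) * (Real.sqrt ((6*(n:ℝ)*δ*(ω δ)) * (12*π*δ))
            + (2*C*((n:ℝ)*δ*m₀ (2*δ))) * (8/((n:ℝ)*δ*m₀ (2*δ)))) := by
          apply mul_le_mul_of_nonneg_left _ (by positivity)
          apply add_le_add
          · have hcs := sum_le_sqrt_card_mul ((Finset.Icc ⌈(n : ℝ) * deriv h 0⌉
              ⌊(n : ℝ) * deriv h (2 * δ)⌋).filter
              (fun ν : ℤ => (n : ℝ) * deriv h 0 + 1 < (ν : ℝ) ∧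
                (ν : ℝ) < (n : ℝ) * deriv h (2 * δ)))
              (fun ν => ‖∫ t in (-(3*δ))..(3*δ),
                Complex.exp (Complex.I * ((n:ℂ)*(h t:ℂ) - (ν:ℂ)*(t:ℂ)))‖)
              (fun ν _ => norm_nonneg _)
            apply hcs.trans
            apply Real.sqrt_le_sqrt
            apply mul_le_mul
            · -- card ≤ 6nδω
              have hω6 : (n:ℝ)*(deriv h (2*δ) - deriv h 0) ≤ 6*(n:ℝ)*δ*(ω δ) := by
                have hu := hup 0 (2*δ) (3*(ω δ)) (by linarith) htel0
                have := mul_le_mul_of_nonneg_left hu hNpos.le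
                nlinarith [this]
              exact hScard.trans hω6
            · exact hBess
            · exact Finset.sum_nonneg (fun ν _ => by positivity)
            · positivity
          · -- card * (8/G) ≤ (2CG)*(8/G)
            apply mul_le_mul_of_nonneg_right _ (by positivity)
            apply hScard.trans
            have hpt : ∀ s ∈ Set.Icc (0:ℝ) (2*δ), deriv (deriv h) s ≤ C * m₀ (2*δ) := by
              intro s hs
              rcases eq_or_lt_of_le hs.1 with h0 | h0
              · rw [← h0, h''0]
                positivity
              · have hs2 : s ∈ Set.Ioo (0:ℝ) (4*c) := ⟨h0, by linarith [hs.2]⟩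
                calc deriv (deriv h) s ≤ C * m₀ s := (hsand s hs2).2.1
                  _ ≤ C * m₀ (2*δ) := mul_le_mul_of_nonneg_left
                    (hm0 hs2 ⟨by linarith, h2δ4c⟩ hs.2) hCpos.le
            have hu := hup 0 (2*δ) (C * m₀ (2*δ)) (by linarith) hpt
            have := mul_le_mul_of_nonneg_left hu hNpos.le
            nlinarith [this]
      _ ≤ (3 + 3*C) * (1 + (n:ℝ) * δ^2 * ω δ) := by
          have hs1 : (6*(n:ℝ)*δ*(ω δ)) * (12*π*δ) = (72*π)*((n:ℝ)*δ^2*(ω δ)) := by ring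
          rw [hs1, Real.sqrt_mul (by positivity)]
          have hs2 : Real.sqrt (72*π) ≤ 6*π := by
            rw [show (6*π) = Real.sqrt ((6*π)^2) from (Real.sqrt_sq (by positivity)).symm]
            apply Real.sqrt_le_sqrt
            nlinarith
          have hs3 : Real.sqrt ((n:ℝ)*δ^2*(ω δ)) ≤ 1 + (n:ℝ)*δ^2*(ω δ) :=
            sqrt_le_one_add _ hA
          have hs4 : (2*C*((n:ℝ)*δ*m₀ (2*δ))) * (8/((n:ℝ)*δ*m₀ (2*δ))) = 16*C := by
            field_simp
            ring
          rw [hs4]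
          have hs5 : Real.sqrt (72*π) * Real.sqrt ((n:ℝ)*δ^2*(ω δ))
              ≤ (6*π)*(1 + (n:ℝ)*δ^2*(ω δ)) :=
            mul_le_mul hs2 hs3 (Real.sqrt_nonneg _) (by positivity)
          rw [one_div, inv_mul_eq_div, div_le_iff₀ h2πpos]
          have hCA : 0 ≤ C * ((n:ℝ)*δ^2*(ω δ)) := mul_nonneg hCpos.le hA
          nlinarith [hs5, hCpos, hA, hπ3, hCA]

  · -- SECOND SUM
    have mπ2δpos : 0 < mπ (2*δ) := (hMpos (2*δ) ⟨by linarith, h2δ4c⟩).2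
    have hNpos : (0:ℝ) < (n:ℝ) := by linarith
    have hGpos : 0 < (n:ℝ)*δ*mπ (2*δ) := by positivity
    have hπ2δ0 : (0:ℝ) ≤ π - 2*δ := by linarith
    have hm2δπ : deriv h (π - 2*δ) ≤ deriv h π :=
      hmono' (π - 2*δ) π (by linarith) (fun s hs => h''nonneg s ⟨by linarith [hs.1], hs.2⟩)
    -- cardinality bound
    have hScard : (((Finset.Icc ⌈(n : ℝ) * deriv h (π - 2 * δ)⌉
        ⌊(n : ℝ) * deriv h π⌋).filter
        (fun ν : ℤ => (n : ℝ) * deriv h (π - 2 * δ) < (ν : ℝ) ∧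
          (ν : ℝ) < (n : ℝ) * deriv h π - 1)).card : ℝ)
        ≤ (n:ℝ) * (deriv h π - deriv h (π - 2*δ)) := by
      have hxy : (n:ℝ) * deriv h (π - 2*δ) ≤ ((n:ℝ) * deriv h π - 1) + 1 := by
        have := mul_le_mul_of_nonneg_left hm2δπ hNpos.le
        linarith
      have := card_filter_le_aux ((n:ℝ) * deriv h (π - 2*δ)) ((n:ℝ) * deriv h π - 1) hxy
        ⌈(n : ℝ) * deriv h (π - 2 * δ)⌉ ⌊(n : ℝ) * deriv h π⌋
        (fun ν : ℤ => (n : ℝ) * deriv h (π - 2 * δ) < (ν : ℝ) ∧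
          (ν : ℝ) < (n : ℝ) * deriv h π - 1)
        (fun ν hν => ⟨hν.1.le, hν.2.le⟩)
      have hexp : (n:ℝ)*(deriv h π - deriv h (π - 2*δ))
          = (n:ℝ)*deriv h π - (n:ℝ)*deriv h (π - 2*δ) := by ring
      linarith
    -- periodicity shift
    have hshift : ∀ ν : ℤ, (∫ t in (-π)..π,
        Complex.exp (Complex.I * ((n:ℂ)*(h t:ℂ) - (ν:ℂ)*(t:ℂ))))
        = ∫ t in (0:ℝ)..(2*π),
            Complex.exp (Complex.I * ((n:ℂ)*(h t:ℂ) - (ν:ℂ)*(t:ℂ))) := by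
      intro ν
      have hEper : Function.Periodic (fun t : ℝ =>
          Complex.exp (Complex.I * ((n:ℂ)*(h t:ℂ) - (ν:ℂ)*(t:ℂ)))) (2*π) := by
        intro t
        show Complex.exp (Complex.I * ((n:ℂ)*((h (t + 2*π) : ℝ):ℂ) - (ν:ℂ)*((t + 2*π : ℝ):ℂ)))
          = Complex.exp (Complex.I * ((n:ℂ)*(h t:ℂ) - (ν:ℂ)*(t:ℂ)))
        rw [hper t]
        have harg : Complex.I * ((n:ℂ)*((h t + 2*(k:ℝ)*π : ℝ):ℂ) - (ν:ℂ)*((t + 2*π : ℝ):ℂ))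
            = Complex.I * ((n:ℂ)*(h t:ℂ) - (ν:ℂ)*(t:ℂ))
              + (((n:ℤ)*k - ν : ℤ):ℂ)*(2*(π:ℂ)*Complex.I) := by
          push_cast
          ring
        rw [harg, Complex.exp_add, Complex.exp_int_mul_two_pi_mul_I, mul_one]
      have := hEper.intervalIntegral_add_eq (-π) 0
      rw [show -π + 2*π = π by ring, zero_add] at this
      exact this
    -- lower bound on phase derivative on the middle region
    have hlbM : ∀ ν : ℤ, (n:ℝ) * deriv h (π - 2*δ) ≤ (ν:ℝ) → ∀ t ∈ Set.Icc (0:ℝ) (π - 3*δ),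
        (n:ℝ)*δ*mπ (2*δ) ≤ |(n:ℝ) * deriv h t - (ν:ℝ)| := by
      intro ν hν1 t ht
      have k1 : ((π - 2*δ) - (π - 3*δ)) * mπ (2*δ) ≤ deriv h (π - 2*δ) - deriv h (π - 3*δ) := by
        apply hlow _ _ _ (by linarith)
        intro s hs
        have hu2 : π - s ∈ Set.Ioo (0:ℝ) (4*c) := ⟨by linarith [hs.2], by linarith [hs.1]⟩
        calc mπ (2*δ) ≤ mπ (π - s) := hmπ ⟨by linarith, h2δ4c⟩ hu2 (by linarith [hs.2])
          _ ≤ deriv (deriv h) (π - (π - s)) := (hsand (π - s) hu2).2.2.1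
          _ = deriv (deriv h) s := by rw [show π - (π - s) = s by ring]
      have k2 : deriv h t ≤ deriv h (π - 3*δ) :=
        hmono' t (π - 3*δ) ht.2 (fun s hs =>
          h''nonneg s ⟨le_trans ht.1 hs.1, by linarith [hs.2]⟩)
      have hX : (n:ℝ)*δ*mπ (2*δ) ≤ (ν:ℝ) - (n:ℝ) * deriv h t := by
        have c1 : (n:ℝ)*(((π - 2*δ) - (π - 3*δ)) * mπ (2*δ))
            ≤ (n:ℝ)*(deriv h (π - 2*δ) - deriv h (π - 3*δ)) :=
          mul_le_mul_of_nonneg_left k1 hNpos.le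
        have c2 : (n:ℝ)*(deriv h (π - 2*δ) - deriv h (π - 3*δ))
            ≤ (n:ℝ)*(deriv h (π - 2*δ) - deriv h t) :=
          mul_le_mul_of_nonneg_left (by linarith) hNpos.le
        nlinarith [c1, c2]
      calc (n:ℝ)*δ*mπ (2*δ) ≤ -((n:ℝ) * deriv h t - (ν:ℝ)) := by linarith
        _ ≤ |(n:ℝ) * deriv h t - (ν:ℝ)| := neg_le_abs _
    -- tails
    have tailM : ∀ ν : ℤ, (n:ℝ) * deriv h (π - 2*δ) ≤ (ν:ℝ) →
        ‖∫ t in (0:ℝ)..(π - 3*δ), Complex.exp (Complex.I * ((n:ℂ)*(h t:ℂ) - (ν:ℂ)*(t:ℂ)))‖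
          ≤ 4/((n:ℝ)*δ*mπ (2*δ)) := by
      intro ν hν1
      have hcongr : ∀ t ∈ Set.uIcc (0:ℝ) (π - 3*δ),
          Complex.exp (Complex.I * ((n:ℂ)*(h t:ℂ) - (ν:ℂ)*(t:ℂ)))
          = Complex.exp (Complex.I * ((((n:ℝ)* h t - (ν:ℝ)*t : ℝ)):ℂ)) := by
        intro t _
        congr 1
        push_cast
        ring
      rw [intervalIntegral.integral_congr hcongr]
      have huI : Set.uIcc (0:ℝ) (π - 3*δ) = Set.Icc (0:ℝ) (π - 3*δ) :=
        Set.uIcc_of_le (by linarith)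
      apply osc_bound (fun t => (n:ℝ)* h t - (ν:ℝ)*t) (fun t => (n:ℝ) * deriv h t - (ν:ℝ))
        (fun t => (n:ℝ) * deriv (deriv h) t) 0 (π - 3*δ) ((n:ℝ)*δ*mπ (2*δ))
        (by linarith) hGpos
      · intro t _
        exact (((hd1 t).const_mul ((n:ℝ))).sub
          ((hasDerivAt_id t).const_mul ((ν:ℝ)))).congr_deriv (by ring)
      · intro t _
        exact ((hd2 t).const_mul ((n:ℝ))).sub_const _
      · exact (continuous_const.mul hcont2).continuousOn
      · rw [huI]; exact hlbM ν hν1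
      · left
        intro t ht
        rw [huI] at ht
        exact mul_nonneg hNpos.le (h''nonneg t ⟨ht.1, by linarith [ht.2]⟩)
    have tailR2 : ∀ ν : ℤ, (n:ℝ) * deriv h (π - 2*δ) ≤ (ν:ℝ) →
        ‖∫ t in (π + 3*δ)..(2*π), Complex.exp (Complex.I * ((n:ℂ)*(h t:ℂ) - (ν:ℂ)*(t:ℂ)))‖
          ≤ 4/((n:ℝ)*δ*mπ (2*δ)) := by
      intro ν hν1
      have hcongr : ∀ t ∈ Set.uIcc (π + 3*δ) (2*π),
          Complex.exp (Complex.I * ((n:ℂ)*(h t:ℂ) - (ν:ℂ)*(t:ℂ)))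
          = Complex.exp (Complex.I * ((((n:ℝ)* h t - (ν:ℝ)*t : ℝ)):ℂ)) := by
        intro t _
        congr 1
        push_cast
        ring
      rw [intervalIntegral.integral_congr hcongr]
      have huI : Set.uIcc (π + 3*δ) (2*π) = Set.Icc (π + 3*δ) (2*π) :=
        Set.uIcc_of_le (by linarith)
      have hps : ∀ t : ℝ, deriv h t = deriv h (2*π - t) := by
        intro t
        have p := hper1 (t - 2*π)
        rw [show t - 2*π + 2*π = t by ring] at p
        have e := hteven (2*π - t)
        rw [show -(2*π - t) = t - 2*π by ring] at e
        rw [p, ← e]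
      have hps2 : ∀ t : ℝ, deriv (deriv h) t = deriv (deriv h) (t - 2*π) := by
        intro t
        have p := hper2 (t - 2*π)
        rw [show t - 2*π + 2*π = t by ring] at p
        exact p
      apply osc_bound (fun t => (n:ℝ)* h t - (ν:ℝ)*t) (fun t => (n:ℝ) * deriv h t - (ν:ℝ))
        (fun t => (n:ℝ) * deriv (deriv h) t) (π + 3*δ) (2*π) ((n:ℝ)*δ*mπ (2*δ))
        (by linarith) hGpos
      · intro t _
        exact (((hd1 t).const_mul ((n:ℝ))).sub
          ((hasDerivAt_id t).const_mul ((ν:ℝ)))).congr_deriv (by ring)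
      · intro t _
        exact ((hd2 t).const_mul ((n:ℝ))).sub_const _
      · exact (continuous_const.mul hcont2).continuousOn
      · rw [huI]
        intro t ht
        have hmt : 2*π - t ∈ Set.Icc (0:ℝ) (π - 3*δ) :=
          ⟨by linarith [ht.2], by linarith [ht.1]⟩
        have := hlbM ν hν1 (2*π - t) hmt
        rw [← hps t] at this
        exact this
      · right
        intro t ht
        rw [huI] at ht
        have hneg : deriv (deriv h) t ≤ 0 := by
          rw [hps2 t]
          exact h''nonpos (t - 2*π) ⟨by linarith [ht.1], by linarith [ht.2]⟩
        exact mul_nonpos_of_nonneg_of_nonpos hNpos.le hneg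
    -- splitting of the shifted integral
    have hsplitI : ∀ ν : ℤ, (∫ t in (0:ℝ)..(2*π),
        Complex.exp (Complex.I * ((n:ℂ)*(h t:ℂ) - (ν:ℂ)*(t:ℂ))))
        = (∫ t in (0:ℝ)..(π - 3*δ), Complex.exp (Complex.I * ((n:ℂ)*(h t:ℂ) - (ν:ℂ)*(t:ℂ))))
          + (∫ t in (π - 3*δ)..(π + 3*δ),
              Complex.exp (Complex.I * ((n:ℂ)*(h t:ℂ) - (ν:ℂ)*(t:ℂ))))
          + (∫ t in (π + 3*δ)..(2*π),
              Complex.exp (Complex.I * ((n:ℂ)*(h t:ℂ) - (ν:ℂ)*(t:ℂ)))) := by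
      intro ν
      have i1 : IntervalIntegrable (fun t : ℝ =>
          Complex.exp (Complex.I * ((n:ℂ)*(h t:ℂ) - (ν:ℂ)*(t:ℂ)))) volume 0 (π - 3*δ) :=
        (hEc ν).intervalIntegrable _ _
      have i2 : IntervalIntegrable (fun t : ℝ =>
          Complex.exp (Complex.I * ((n:ℂ)*(h t:ℂ) - (ν:ℂ)*(t:ℂ)))) volume (π - 3*δ) (π + 3*δ) :=
        (hEc ν).intervalIntegrable _ _
      have i12 : IntervalIntegrable (fun t : ℝ =>
          Complex.exp (Complex.I * ((n:ℂ)*(h t:ℂ) - (ν:ℂ)*(t:ℂ)))) volume 0 (π + 3*δ) :=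
        (hEc ν).intervalIntegrable _ _
      have i3 : IntervalIntegrable (fun t : ℝ =>
          Complex.exp (Complex.I * ((n:ℂ)*(h t:ℂ) - (ν:ℂ)*(t:ℂ)))) volume (π + 3*δ) (2*π) :=
        (hEc ν).intervalIntegrable _ _
      rw [intervalIntegral.integral_add_adjacent_intervals i1 i2,
        intervalIntegral.integral_add_adjacent_intervals i12 i3]
    -- Bessel bound on the middle terms
    have hBess : ∑ ν ∈ (Finset.Icc ⌈(n : ℝ) * deriv h (π - 2 * δ)⌉
        ⌊(n : ℝ) * deriv h π⌋).filter
        (fun ν : ℤ => (n : ℝ) * deriv h (π - 2 * δ) < (ν : ℝ) ∧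
          (ν : ℝ) < (n : ℝ) * deriv h π - 1),
        ‖∫ t in (π - 3*δ)..(π + 3*δ),
          Complex.exp (Complex.I * ((n:ℂ)*(h t:ℂ) - (ν:ℂ)*(t:ℂ)))‖^2
        ≤ 12*π*δ := by
      have hb := bessel F hFc hF1 (π - 3*δ) (π + 3*δ) (by linarith) (by linarith)
        ((Finset.Icc ⌈(n : ℝ) * deriv h (π - 2 * δ)⌉ ⌊(n : ℝ) * deriv h π⌋).filter
          (fun ν : ℤ => (n : ℝ) * deriv h (π - 2 * δ) < (ν : ℝ) ∧
            (ν : ℝ) < (n : ℝ) * deriv h π - 1))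
      have heq : ∀ ν : ℤ,
          (∫ t in (π - 3*δ)..(π + 3*δ),
            Complex.exp (Complex.I * ((n:ℂ)*(h t:ℂ) - (ν:ℂ)*(t:ℂ))))
          = ∫ t in (π - 3*δ)..(π + 3*δ), F t * Complex.exp (-(Complex.I * (ν:ℂ) * (t:ℂ))) :=
        fun ν => intervalIntegral.integral_congr (fun t _ => hEsplit ν t)
      rw [show (2:ℝ)*π*((π + 3*δ) - (π - 3*δ)) = 12*π*δ by ring] at hb
      exact le_of_eq_of_le (Finset.sum_congr rfl (fun ν _ => by rw [heq ν])) hb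
    -- per-term bound
    have hper_term : ∀ ν ∈ (Finset.Icc ⌈(n : ℝ) * deriv h (π - 2 * δ)⌉
        ⌊(n : ℝ) * deriv h π⌋).filter
        (fun ν : ℤ => (n : ℝ) * deriv h (π - 2 * δ) < (ν : ℝ) ∧
          (ν : ℝ) < (n : ℝ) * deriv h π - 1),
        ‖((1 / (2 * π)) * ∫ t in (-π)..π,
          Complex.exp (Complex.I * ((n : ℂ) * (h t : ℂ) - (ν : ℂ) * (t : ℂ))))‖
        ≤ (1/(2*π)) * ((‖∫ t in (π - 3*δ)..(π + 3*δ),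
            Complex.exp (Complex.I * ((n:ℂ)*(h t:ℂ) - (ν:ℂ)*(t:ℂ)))‖)
            + 8/((n:ℝ)*δ*mπ (2*δ))) := by
      intro ν hν
      have hν1 : (n:ℝ) * deriv h (π - 2*δ) ≤ (ν:ℝ) := ((Finset.mem_filter.mp hν).2).1.le
      rw [norm_mul, habsfac]
      apply mul_le_mul_of_nonneg_left _ (by positivity)
      rw [hshift ν]
      calc ‖∫ t in (0:ℝ)..(2*π), Complex.exp (Complex.I * ((n:ℂ)*(h t:ℂ) - (ν:ℂ)*(t:ℂ)))‖
          = ‖(∫ t in (0:ℝ)..(π - 3*δ),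
              Complex.exp (Complex.I * ((n:ℂ)*(h t:ℂ) - (ν:ℂ)*(t:ℂ))))
            + (∫ t in (π - 3*δ)..(π + 3*δ),
              Complex.exp (Complex.I * ((n:ℂ)*(h t:ℂ) - (ν:ℂ)*(t:ℂ))))
            + (∫ t in (π + 3*δ)..(2*π),
              Complex.exp (Complex.I * ((n:ℂ)*(h t:ℂ) - (ν:ℂ)*(t:ℂ))))‖ := by
              rw [hsplitI ν]
        _ ≤ ‖(∫ t in (0:ℝ)..(π - 3*δ),
              Complex.exp (Complex.I * ((n:ℂ)*(h t:ℂ) - (ν:ℂ)*(t:ℂ))))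
            + (∫ t in (π - 3*δ)..(π + 3*δ),
              Complex.exp (Complex.I * ((n:ℂ)*(h t:ℂ) - (ν:ℂ)*(t:ℂ))))‖
            + ‖∫ t in (π + 3*δ)..(2*π),
              Complex.exp (Complex.I * ((n:ℂ)*(h t:ℂ) - (ν:ℂ)*(t:ℂ)))‖ :=
              norm_add_le _ _
        _ ≤ (‖∫ t in (0:ℝ)..(π - 3*δ),
              Complex.exp (Complex.I * ((n:ℂ)*(h t:ℂ) - (ν:ℂ)*(t:ℂ)))‖
            + ‖∫ t in (π - 3*δ)..(π + 3*δ),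
              Complex.exp (Complex.I * ((n:ℂ)*(h t:ℂ) - (ν:ℂ)*(t:ℂ)))‖)
            + ‖∫ t in (π + 3*δ)..(2*π),
              Complex.exp (Complex.I * ((n:ℂ)*(h t:ℂ) - (ν:ℂ)*(t:ℂ)))‖ := by
              gcongr
              exact norm_add_le _ _
        _ ≤ (4/((n:ℝ)*δ*mπ (2*δ))
            + ‖∫ t in (π - 3*δ)..(π + 3*δ),
              Complex.exp (Complex.I * ((n:ℂ)*(h t:ℂ) - (ν:ℂ)*(t:ℂ)))‖)
            + 4/((n:ℝ)*δ*mπ (2*δ)) := by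
              gcongr
              · exact tailM ν hν1
              · exact tailR2 ν hν1
        _ = ‖∫ t in (π - 3*δ)..(π + 3*δ),
              Complex.exp (Complex.I * ((n:ℂ)*(h t:ℂ) - (ν:ℂ)*(t:ℂ)))‖
            + 8/((n:ℝ)*δ*mπ (2*δ)) := by ring
    -- assemble
    calc (∑ ν ∈ (Finset.Icc ⌈(n : ℝ) * deriv h (π - 2 * δ)⌉
          ⌊(n : ℝ) * deriv h π⌋).filter
          (fun ν : ℤ => (n : ℝ) * deriv h (π - 2 * δ) < (ν : ℝ) ∧
            (ν : ℝ) < (n : ℝ) * deriv h π - 1),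
          ‖((1 / (2 * π)) * ∫ t in (-π)..π,
            Complex.exp (Complex.I * ((n : ℂ) * (h t : ℂ) - (ν : ℂ) * (t : ℂ))))‖)
        ≤ ∑ ν ∈ (Finset.Icc ⌈(n : ℝ) * deriv h (π - 2 * δ)⌉
          ⌊(n : ℝ) * deriv h π⌋).filter
          (fun ν : ℤ => (n : ℝ) * deriv h (π - 2 * δ) < (ν : ℝ) ∧
            (ν : ℝ) < (n : ℝ) * deriv h π - 1),
          ((1/(2*π)) * ((‖∫ t in (π - 3*δ)..(π + 3*δ),
            Complex.exp (Complex.I * ((n:ℂ)*(h t:ℂ) - (ν:ℂ)*(t:ℂ)))‖)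
            + 8/((n:ℝ)*δ*mπ (2*δ)))) := Finset.sum_le_sum hper_term
      _ = (1/(2*π)) * ((∑ ν ∈ (Finset.Icc ⌈(n : ℝ) * deriv h (π - 2 * δ)⌉
            ⌊(n : ℝ) * deriv h π⌋).filter
            (fun ν : ℤ => (n : ℝ) * deriv h (π - 2 * δ) < (ν : ℝ) ∧
              (ν : ℝ) < (n : ℝ) * deriv h π - 1),
            ‖∫ t in (π - 3*δ)..(π + 3*δ),
              Complex.exp (Complex.I * ((n:ℂ)*(h t:ℂ) - (ν:ℂ)*(t:ℂ)))‖)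
            + (((Finset.Icc ⌈(n : ℝ) * deriv h (π - 2 * δ)⌉
            ⌊(n : ℝ) * deriv h π⌋).filter
            (fun ν : ℤ => (n : ℝ) * deriv h (π - 2 * δ) < (ν : ℝ) ∧
              (ν : ℝ) < (n : ℝ) * deriv h π - 1)).card : ℝ) * (8/((n:ℝ)*δ*mπ (2*δ)))) := by
          rw [← Finset.mul_sum, Finset.sum_add_distrib, Finset.sum_const, nsmul_eq_mul]
      _ ≤ (1/(2*π)) * (Real.sqrt ((6*(n:ℝ)*δ*(ω δ)) * (12*π*δ))
            + (2*C*((n:ℝ)*δ*mπ (2*δ))) * (8/((n:ℝ)*δ*mπ (2*δ)))) := by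
          apply mul_le_mul_of_nonneg_left _ (by positivity)
          apply add_le_add
          · have hcs := sum_le_sqrt_card_mul ((Finset.Icc ⌈(n : ℝ) * deriv h (π - 2 * δ)⌉
              ⌊(n : ℝ) * deriv h π⌋).filter
              (fun ν : ℤ => (n : ℝ) * deriv h (π - 2 * δ) < (ν : ℝ) ∧
                (ν : ℝ) < (n : ℝ) * deriv h π - 1))
              (fun ν => ‖∫ t in (π - 3*δ)..(π + 3*δ),
                Complex.exp (Complex.I * ((n:ℂ)*(h t:ℂ) - (ν:ℂ)*(t:ℂ)))‖)
              (fun ν _ => norm_nonneg _)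
            apply hcs.trans
            apply Real.sqrt_le_sqrt
            apply mul_le_mul
            · have hω6 : (n:ℝ)*(deriv h π - deriv h (π - 2*δ)) ≤ 6*(n:ℝ)*δ*(ω δ) := by
                have hu := hup (π - 2*δ) π (3*(ω δ)) (by linarith) htelπ
                have := mul_le_mul_of_nonneg_left hu hNpos.le
                nlinarith [this]
              exact hScard.trans hω6
            · exact hBess
            · exact Finset.sum_nonneg (fun ν _ => by positivity)
            · positivity
          · apply mul_le_mul_of_nonneg_right _ (by positivity)
            apply hScard.trans
            have hpt : ∀ s ∈ Set.Icc (π - 2*δ) π, deriv (deriv h) s ≤ C * mπ (2*δ) := by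
              intro s hs
              rcases eq_or_lt_of_le hs.2 with h0 | h0
              · rw [h0, h''π]
                positivity
              · have hu2 : π - s ∈ Set.Ioo (0:ℝ) (4*c) := ⟨by linarith, by linarith [hs.1]⟩
                calc deriv (deriv h) s = deriv (deriv h) (π - (π - s)) := by
                      rw [show π - (π - s) = s by ring]
                  _ ≤ C * mπ (π - s) := (hsand (π - s) hu2).2.2.2
                  _ ≤ C * mπ (2*δ) := mul_le_mul_of_nonneg_left
                      (hmπ hu2 ⟨by linarith, h2δ4c⟩ (by linarith [hs.1])) hCpos.le
            have hu := hup (π - 2*δ) π (C * mπ (2*δ)) (by linarith) hpt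
            have := mul_le_mul_of_nonneg_left hu hNpos.le
            nlinarith [this]
      _ ≤ (3 + 3*C) * (1 + (n:ℝ) * δ^2 * ω δ) := by
          have hs1 : (6*(n:ℝ)*δ*(ω δ)) * (12*π*δ) = (72*π)*((n:ℝ)*δ^2*(ω δ)) := by ring
          rw [hs1, Real.sqrt_mul (by positivity)]
          have hs2 : Real.sqrt (72*π) ≤ 6*π := by
            rw [show (6*π) = Real.sqrt ((6*π)^2) from (Real.sqrt_sq (by positivity)).symm]
            apply Real.sqrt_le_sqrt
            nlinarith
          have hs3 : Real.sqrt ((n:ℝ)*δ^2*(ω δ)) ≤ 1 + (n:ℝ)*δ^2*(ω δ) :=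
            sqrt_le_one_add _ hA
          have hs4 : (2*C*((n:ℝ)*δ*mπ (2*δ))) * (8/((n:ℝ)*δ*mπ (2*δ))) = 16*C := by
            field_simp
            ring
          rw [hs4]
          have hs5 : Real.sqrt (72*π) * Real.sqrt ((n:ℝ)*δ^2*(ω δ))
              ≤ (6*π)*(1 + (n:ℝ)*δ^2*(ω δ)) :=
            mul_le_mul hs2 hs3 (Real.sqrt_nonneg _) (by positivity)
          rw [one_div, inv_mul_eq_div, div_le_iff₀ h2πpos]
          have hCA : 0 ≤ C * ((n:ℝ)*δ^2*(ω δ)) := mul_nonneg hCpos.le hA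
          nlinarith [hs5, hCpos, hA, hπ3, hCA]
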